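/- Let G be a group, K₁ and K₂ sets, K = K₁ ⊕ K₂ their disjoint union, and ∂₀ : K → G a map with ∂₀(m) = 1 for every m ∈ K₂. Let (G, E, ∂, ▷) be the free crossed module on ∂₀ and let F₂ be the subgroup of E generated by {X ▷ ⟦1,m⟧ : X ∈ G, m ∈ K₂}. Then F₂ is isomorphic, as a group, to the free abelian group on the set (G ⧸ range ∂) × K₂, via an isomorphism sending X ▷ ⟦1,m⟧ (for X ∈ G, m ∈ K₂) to the basis element ([X], m), where [X] denotes the coset of X in G ⧸ range ∂; moreover this isomorphism intertwines the G-action ▷ on F₂ with the G-action on the free abelian group determined on basis elements by X·([Y], m) = ([X·Y], m). -/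

import Mathlib

/-- The defining relations of the principal group of the free crossed module on a map
`d0 : K → G`. -/
def crossedRels {G K : Type*} [Group G] (d0 : K → G) : Set (FreeGroup (G × K)) :=
  {r | ∃ (X Y : G) (m n : K),
    r = FreeGroup.of (X, m) * FreeGroup.of (Y, n) * (FreeGroup.of (X, m))⁻¹ *
        (FreeGroup.of (X * d0 m * X⁻¹ * Y, n))⁻¹}

/-- The principal group `E(d0)` of the free crossed module on `d0 : K → G`. -/
abbrev FreeCMGroup {G K : Type*} [Group G] (d0 : K → G) : Type _ :=
  PresentedGroup (crossedRels d0)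

/-- The class `⟦X, m⟧` of the generator `(X, m)` in `E(d0)`. -/
def cmGen {G K : Type*} [Group G] (d0 : K → G) (X : G) (m : K) : FreeCMGroup d0 :=
  PresentedGroup.of (X, m)

/-- Let `G` be a group, `K = K₁ ⊕ K₂`, and `d0 : K → G` a map with
`d0 m = 1` for every `m ∈ K₂`.  Let `(G, E, δ, ρ)` be the free crossed module on `d0`
(whose boundary has normal range, so that the quotient group `G ⧸ range δ` is defined) and
let `F₂ ≤ E` be the subgroup generated by `{ρ X ⟦1,m⟧ : X ∈ G, m ∈ K₂}`.  Then `F₂` is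
isomorphic, as a group, to the free abelian group on `(G ⧸ range δ) × K₂` via an isomorphism
sending `ρ X ⟦1,m⟧` to the basis element `([X], m)`; moreover this isomorphism intertwines
the `G`-action on `F₂` with the `G`-action on the free abelian group determined on basis
elements by `X · ([Y], m) = ([X*Y], m)`. -/
theorem freeCrossedModule_F2_free_abelian {G K1 K2 : Type*} [Group G]
    (d0 : K1 ⊕ K2 → G) (h2 : ∀ m : K2, d0 (Sum.inr m) = 1)
    (δ : FreeCMGroup d0 →* G) (ρ : G →* MulAut (FreeCMGroup d0))
    (hδ : ∀ (X : G) (m : K1 ⊕ K2), δ (cmGen d0 X m) = X * d0 m * X⁻¹)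
    (hρ : ∀ (X Y : G) (m : K1 ⊕ K2), ρ X (cmGen d0 Y m) = cmGen d0 (X * Y) m)
    (hCM1 : ∀ (X : G) (e : FreeCMGroup d0), δ (ρ X e) = X * δ e * X⁻¹)
    (hCM2 : ∀ e f : FreeCMGroup d0, ρ (δ e) f = e * f * e⁻¹)
    [hN : δ.range.Normal]
    (F2 : Subgroup (FreeCMGroup d0))
    (hF2 : F2 = Subgroup.closure
      {x | ∃ (X : G) (m : K2), x = ρ X (cmGen d0 1 (Sum.inr m))}) :
    (∀ (X : G) (m : K2), ρ X (cmGen d0 1 (Sum.inr m)) ∈ F2) ∧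
    (∀ (X : G), ∀ f ∈ F2, ρ X f ∈ F2) ∧
    ∃ θ : F2 ≃* Multiplicative (FreeAbelianGroup ((G ⧸ δ.range) × K2)),
      (∀ (X : G) (m : K2) (h : ρ X (cmGen d0 1 (Sum.inr m)) ∈ F2),
        θ ⟨ρ X (cmGen d0 1 (Sum.inr m)), h⟩ =
          Multiplicative.ofAdd
            (FreeAbelianGroup.of ((QuotientGroup.mk X : G ⧸ δ.range), m))) ∧
      (∀ (X : G) (f : FreeCMGroup d0) (hf : f ∈ F2) (hxf : ρ X f ∈ F2),
        θ ⟨ρ X f, hxf⟩ = Multiplicative.ofAdd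
          (FreeAbelianGroup.map
            (fun p : (G ⧸ δ.range) × K2 =>
              ((QuotientGroup.mk X : G ⧸ δ.range) * p.1, p.2))
            (Multiplicative.toAdd (θ ⟨f, hf⟩)))) := by
  classical
  -- ρ X ⟦1,m⟧ = ⟦X,m⟧
  have hρ1 : ∀ (X : G) (m : K1 ⊕ K2), ρ X (cmGen d0 1 m) = cmGen d0 X m := by
    intro X m; rw [hρ, mul_one]
  -- δ kills generators from K2
  have hδ2 : ∀ (X : G) (m : K2), δ (cmGen d0 X (Sum.inr m)) = 1 := by
    intro X m; rw [hδ, h2]; group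
  -- centrality of the K2-generators
  have hcen : ∀ (X : G) (m : K2) (f : FreeCMGroup d0),
      cmGen d0 X (Sum.inr m) * f = f * cmGen d0 X (Sum.inr m) := by
    intro X m f
    have h := hCM2 (cmGen d0 X (Sum.inr m)) f
    rw [hδ2, map_one] at h
    have h' : f = cmGen d0 X (Sum.inr m) * f * (cmGen d0 X (Sum.inr m))⁻¹ := h
    rw [eq_comm, mul_inv_eq_iff_eq_mul] at h'
    exact h'
  -- bullet 1
  have bullet1 : ∀ (X : G) (m : K2), ρ X (cmGen d0 1 (Sum.inr m)) ∈ F2 := by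
    intro X m
    rw [hF2]
    exact Subgroup.subset_closure ⟨X, m, rfl⟩
  have hmemgen : ∀ (X : G) (m : K2), cmGen d0 X (Sum.inr m) ∈ F2 := by
    intro X m; rw [← hρ1]; exact bullet1 X m
  -- bullet 2
  have bullet2 : ∀ (X : G), ∀ f ∈ F2, ρ X f ∈ F2 := by
    intro X f hf
    have hf' : f ∈ Subgroup.closure
        {x | ∃ (Y : G) (m : K2), x = ρ Y (cmGen d0 1 (Sum.inr m))} := hF2 ▸ hf
    clear hf
    induction hf' using Subgroup.closure_induction with
    | mem x hx =>
      obtain ⟨Y, m, rfl⟩ := hx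
      have : ρ X (ρ Y (cmGen d0 1 (Sum.inr m))) = ρ (X * Y) (cmGen d0 1 (Sum.inr m)) := by
        rw [map_mul]; rfl
      rw [this]
      exact bullet1 _ m
    | one => simpa using F2.one_mem
    | mul x y hx hy ihx ihy =>
      rw [map_mul]; exact F2.mul_mem ihx ihy
    | inv x hx ihx =>
      rw [map_inv]; exact F2.inv_mem ihx
  -- F2 is commutative
  have hle : F2 ≤ Subgroup.center (FreeCMGroup d0) := by
    rw [hF2, Subgroup.closure_le]
    rintro x ⟨X, m, rfl⟩
    rw [hρ1]
    exact Subgroup.mem_center_iff.mpr fun g => (hcen X m g).symm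
  letI hFc : CommGroup F2 :=
    { (inferInstance : Group F2) with mul_comm := fun a b => Subtype.ext (Subgroup.mem_center_iff.mp (hle b.2) a.1) }
  -- the abelianizing map on generators
  set Q := G ⧸ δ.range with hQ
  set A := Multiplicative (FreeAbelianGroup (Q × K2)) with hA
  set f0 : G × (K1 ⊕ K2) → A := fun p =>
    Sum.rec (fun _ => (1 : A))
      (fun m => Multiplicative.ofAdd (FreeAbelianGroup.of ((QuotientGroup.mk p.1 : Q), m)))
      p.2 with hf0
  have hrel : ∀ r ∈ crossedRels d0, FreeGroup.lift f0 r = 1 := by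
    rintro r ⟨X, Y, m, n, rfl⟩
    simp only [map_mul, map_inv, FreeGroup.lift_apply_of]
    cases n with
    | inl k => simp [hf0]; exact mul_inv_cancel (G := A) _
    | inr k =>
      have hq : (QuotientGroup.mk (X * d0 m * X⁻¹ * Y) : Q) = QuotientGroup.mk Y := by
        rw [eq_comm, QuotientGroup.eq]
        have hmem : X * d0 m * X⁻¹ ∈ δ.range := ⟨cmGen d0 X m, hδ X m⟩
        have : Y⁻¹ * (X * d0 m * X⁻¹ * Y) = Y⁻¹ * (X * d0 m * X⁻¹) * Y⁻¹⁻¹ := by group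
        rw [this]
        exact hN.conj_mem _ hmem Y⁻¹
      show f0 (X, m) * f0 (Y, Sum.inr k) * (f0 (X, m))⁻¹ *
          (f0 (X * d0 m * X⁻¹ * Y, Sum.inr k))⁻¹ = 1
      have : f0 (X * d0 m * X⁻¹ * Y, Sum.inr k) = f0 (Y, Sum.inr k) := by
        simp [hf0, hq]
      rw [this, mul_comm (f0 (X, m)) (f0 (Y, Sum.inr k))]
      rw [mul_inv_cancel_right, mul_inv_cancel]
  set φ : FreeCMGroup d0 →* A := PresentedGroup.toGroup hrel with hφ
  have hφgen : ∀ (X : G) (m : K2), φ (cmGen d0 X (Sum.inr m)) =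
      Multiplicative.ofAdd (FreeAbelianGroup.of ((QuotientGroup.mk X : Q), m)) := by
    intro X m
    exact PresentedGroup.toGroup.of hrel
  set φ' : F2 →* A := φ.comp F2.subtype with hφ'
  -- the inverse map on basis elements
  have hwd : ∀ (m : K2) (a b : G), (QuotientGroup.mk a : Q) = QuotientGroup.mk b →
      cmGen d0 a (Sum.inr m) = cmGen d0 b (Sum.inr m) := by
    intro m a b hab
    rw [QuotientGroup.eq] at hab
    obtain ⟨e, he⟩ := hab
    have hb : b = a * δ e := by rw [he]; group
    have key : cmGen d0 (a * δ e) (Sum.inr m) = cmGen d0 a (Sum.inr m) := by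
      rw [← hρ1 (a * δ e), map_mul, MulAut.mul_apply, hCM2, ← hcen 1 m, mul_assoc,
        mul_inv_cancel, mul_one, hρ1]
    rw [hb]
    exact key.symm
  set bmap : Q × K2 → F2 := fun p =>
    Quotient.liftOn' p.1 (fun X => (⟨cmGen d0 X (Sum.inr p.2), hmemgen X p.2⟩ : F2))
      (fun a b hab => Subtype.ext (hwd p.2 a b (Quotient.sound' hab))) with hbmap
  have hbmap_mk : ∀ (X : G) (m : K2),
      bmap ((QuotientGroup.mk X : Q), m) = ⟨cmGen d0 X (Sum.inr m), hmemgen X m⟩ := by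
    intro X m; rfl
  set ψadd : FreeAbelianGroup (Q × K2) →+ Additive F2 :=
    FreeAbelianGroup.lift (fun p => Additive.ofMul (bmap p)) with hψadd
  set ψ : A →* F2 :=
    { toFun := fun a => Additive.toMul (ψadd (Multiplicative.toAdd a))
      map_one' := by
        show Additive.toMul (ψadd 0) = 1
        rw [map_zero]; rfl
      map_mul' := by
        intro x y
        show Additive.toMul (ψadd (Multiplicative.toAdd x + Multiplicative.toAdd y)) = _
        rw [map_add]; rfl } with hψ
  have hψof : ∀ p : Q × K2, ψ (Multiplicative.ofAdd (FreeAbelianGroup.of p)) = bmap p := by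
    intro p
    show Additive.toMul (ψadd (FreeAbelianGroup.of p)) = bmap p
    rw [hψadd, FreeAbelianGroup.lift_apply_of]
    rfl
  -- ψ ∘ φ' = id
  have hlr : ∀ (f : FreeCMGroup d0) (hf : f ∈ F2), ψ (φ' ⟨f, hf⟩) = ⟨f, hf⟩ := by
    intro f hf
    have hf' : f ∈ Subgroup.closure
        {x | ∃ (Y : G) (m : K2), x = ρ Y (cmGen d0 1 (Sum.inr m))} := hF2 ▸ hf
    induction hf' using Subgroup.closure_induction with
    | mem x hx =>
      obtain ⟨Y, m, rfl⟩ := hx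
      have hx' : ρ Y (cmGen d0 1 (Sum.inr m)) = cmGen d0 Y (Sum.inr m) := hρ1 Y _
      have : φ' ⟨ρ Y (cmGen d0 1 (Sum.inr m)), hf⟩ =
          Multiplicative.ofAdd (FreeAbelianGroup.of ((QuotientGroup.mk Y : Q), m)) := by
        show φ (ρ Y (cmGen d0 1 (Sum.inr m))) = _
        rw [hx']; exact hφgen Y m
      rw [this, hψof, hbmap_mk]
      exact Subtype.ext hx'.symm
    | one =>
      have : (⟨(1 : FreeCMGroup d0), hf⟩ : F2) = 1 := rfl
      rw [this, map_one, map_one]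
    | mul x y hx hy ihx ihy =>
      have hxm : x ∈ F2 := hF2 ▸ hx
      have hym : y ∈ F2 := hF2 ▸ hy
      have : (⟨x * y, hf⟩ : F2) = ⟨x, hxm⟩ * ⟨y, hym⟩ := rfl
      rw [this, map_mul, map_mul, ihx hxm, ihy hym]
    | inv x hx ihx =>
      have hxm : x ∈ F2 := hF2 ▸ hx
      have : (⟨x⁻¹, hf⟩ : F2) = (⟨x, hxm⟩)⁻¹ := rfl
      rw [this, map_inv, map_inv, ihx hxm]
  -- φ' ∘ ψ = id
  have hrl : ∀ a : A, φ' (ψ a) = a := by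
    intro a
    have : ∀ z : FreeAbelianGroup (Q × K2),
        φ' (ψ (Multiplicative.ofAdd z)) = Multiplicative.ofAdd z := by
      intro z
      induction z using FreeAbelianGroup.induction_on with
      | zero => rw [ofAdd_zero, map_one, map_one]
      | of p =>
        rw [hψof]
        obtain ⟨q, m⟩ := p
        induction q using QuotientGroup.induction_on with
        | H X =>
          rw [hbmap_mk]
          show φ (cmGen d0 X (Sum.inr m)) = _
          exact hφgen X m
      | neg z ih => rw [ofAdd_neg, map_inv, map_inv, ih]
      | add z w ihz ihw => rw [ofAdd_add, map_mul, map_mul, ihz, ihw]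
    calc φ' (ψ a) = φ' (ψ (Multiplicative.ofAdd (Multiplicative.toAdd a))) := rfl
    _ = a := this _
  set θ : F2 ≃* A := MonoidHom.toMulEquiv φ' ψ
    (by ext x; exact congrArg Subtype.val (hlr x.1 x.2))
    (MonoidHom.ext fun a => hrl a) with hθ
  have hθapp : ∀ x : F2, θ x = φ' x := fun _ => rfl
  refine ⟨bullet1, bullet2, θ, ?_, ?_⟩
  · intro X m h
    rw [hθapp]
    show φ (ρ X (cmGen d0 1 (Sum.inr m))) = _
    rw [hρ1]
    exact hφgen X m
  · intro X f hf hxf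
    have hf' : f ∈ Subgroup.closure
        {x | ∃ (Y : G) (m : K2), x = ρ Y (cmGen d0 1 (Sum.inr m))} := hF2 ▸ hf
    induction hf' using Subgroup.closure_induction with
    | mem x hx =>
      obtain ⟨Y, m, rfl⟩ := hx
      have e1 : ρ X (ρ Y (cmGen d0 1 (Sum.inr m))) = cmGen d0 (X * Y) (Sum.inr m) := by
        rw [hρ1, hρ]
      have e2 : θ ⟨ρ X (ρ Y (cmGen d0 1 (Sum.inr m))), hxf⟩ =
          Multiplicative.ofAdd (FreeAbelianGroup.of ((QuotientGroup.mk (X * Y) : Q), m)) := by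
        rw [hθapp]
        show φ (ρ X (ρ Y (cmGen d0 1 (Sum.inr m)))) = _
        rw [e1]; exact hφgen _ m
      have e3 : θ ⟨ρ Y (cmGen d0 1 (Sum.inr m)), hf⟩ =
          Multiplicative.ofAdd (FreeAbelianGroup.of ((QuotientGroup.mk Y : Q), m)) := by
        rw [hθapp]
        show φ (ρ Y (cmGen d0 1 (Sum.inr m))) = _
        rw [hρ1]; exact hφgen _ m
      rw [e2, e3]
      simp [QuotientGroup.mk_mul]
    | one =>
      have h1 : (⟨ρ X (1 : FreeCMGroup d0), hxf⟩ : F2) = 1 := Subtype.ext (map_one (ρ X))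
      have h2 : (⟨(1 : FreeCMGroup d0), hf⟩ : F2) = 1 := rfl
      rw [h1, h2, map_one]
      show (1 : A) = Multiplicative.ofAdd
        ((FreeAbelianGroup.map (fun p : Q × K2 => ((QuotientGroup.mk X : Q) * p.1, p.2))) 0)
      rw [map_zero]
      rfl
    | mul x y hx hy ihx ihy =>
      have hxm : x ∈ F2 := hF2 ▸ hx
      have hym : y ∈ F2 := hF2 ▸ hy
      have hxm' : ρ X x ∈ F2 := bullet2 X x hxm
      have hym' : ρ X y ∈ F2 := bullet2 X y hym
      have h1 : (⟨ρ X (x * y), hxf⟩ : F2) = ⟨ρ X x, hxm'⟩ * ⟨ρ X y, hym'⟩ :=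
        Subtype.ext (map_mul (ρ X) x y)
      have h2 : (⟨x * y, hf⟩ : F2) = ⟨x, hxm⟩ * ⟨y, hym⟩ := rfl
      rw [h1, h2, map_mul, map_mul, ihx hxm hxm', ihy hym hym', ← ofAdd_add, ← map_add,
        toAdd_mul]
    | inv x hx ihx =>
      have hxm : x ∈ F2 := hF2 ▸ hx
      have hxm' : ρ X x ∈ F2 := bullet2 X x hxm
      have h1 : (⟨ρ X x⁻¹, hxf⟩ : F2) = (⟨ρ X x, hxm'⟩)⁻¹ :=
        Subtype.ext (map_inv (ρ X) x)
      have h2 : (⟨x⁻¹, hf⟩ : F2) = (⟨x, hxm⟩)⁻¹ := rfl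
      rw [h1, h2, map_inv, map_inv, ihx hxm hxm', ← ofAdd_neg, ← map_neg, toAdd_inv]
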